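/- Let S be a UPB with n members in a bipartite Hilbert space H_A ⊗ H_B of total dimension D, and let ρ̄ = (1/(D−n))(I − Σ_j |ψ_j⟩⟨ψ_j|) be the normalized projector onto the orthogonal complement of span(S). Then the partial transpose of ρ̄ is positive semidefinite. -/

import Mathlib

open scoped ComplexOrder

/-- For a UPB S = {ψ_j = α_j ⊗ β_j} (n orthonormal product states in
ℂ^{dA} ⊗ ℂ^{dB}, with no nonzero product vector orthogonal to all of them),
the state ρ̄ = (1/(D−n))(I − Σ_j |ψ_j⟩⟨ψ_j|) has positive semidefinite
partial transpose. -/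
theorem stmt6 (dA dB n : ℕ)
    (α : Fin n → EuclideanSpace ℂ (Fin dA)) (β : Fin n → EuclideanSpace ℂ (Fin dB))
    (ψ : Fin n → (Fin dA × Fin dB) → ℂ)
    (hψ : ∀ j p, ψ j p = α j p.1 * β j p.2)
    (horthonormal : ∀ j k, (∑ p : Fin dA × Fin dB, (starRingEnd ℂ) (ψ j p) * ψ k p)
        = if j = k then 1 else 0)
    (hupb : ¬ ∃ (a : EuclideanSpace ℂ (Fin dA)) (b : EuclideanSpace ℂ (Fin dB)),
        a ≠ 0 ∧ b ≠ 0 ∧ ∀ j, (inner ℂ a (α j) : ℂ) = 0 ∨ (inner ℂ b (β j) : ℂ) = 0)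
    (hn : n < dA * dB)
    (ρ : Matrix (Fin dA × Fin dB) (Fin dA × Fin dB) ℂ)
    (hρ : ρ = (((dA * dB - n : ℕ) : ℂ))⁻¹ •
        ((1 : Matrix (Fin dA × Fin dB) (Fin dA × Fin dB) ℂ)
          - ∑ j, Matrix.vecMulVec (ψ j) (star (ψ j))))
    (ρPT : Matrix (Fin dA × Fin dB) (Fin dA × Fin dB) ℂ)
    (hPT : ∀ p q, ρPT p q = ρ (p.1, q.2) (q.1, p.2)) :
    ρPT.PosSemidef := by
  classical
  set c : ℂ := (((dA * dB - n : ℕ) : ℂ))⁻¹ with hc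
  -- the conjugated product vectors
  set φ : Fin n → EuclideanSpace ℂ (Fin dA × Fin dB) :=
    fun j => WithLp.toLp 2 (fun p : Fin dA × Fin dB => α j p.1 * (starRingEnd ℂ) (β j p.2)) with hφ
  -- factorized orthonormality data
  have hfact : ∀ j k, (∑ a, (starRingEnd ℂ) (α j a) * α k a) *
      (∑ b, (starRingEnd ℂ) (β j b) * β k b) = if j = k then 1 else 0 := by
    intro j k
    rw [← horthonormal j k, Fintype.sum_prod_type, Finset.sum_mul_sum]
    refine Finset.sum_congr rfl fun a _ => Finset.sum_congr rfl fun b _ => ?_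
    simp only [hψ, map_mul]
    ring
  -- orthonormality of φ
  have hortho : Orthonormal ℂ φ := by
    rw [orthonormal_iff_ite]
    intro j k
    have hφinner : (inner ℂ (φ j) (φ k) : ℂ) =
        (∑ a, (starRingEnd ℂ) (α j a) * α k a) *
        (starRingEnd ℂ) (∑ b, (starRingEnd ℂ) (β j b) * β k b) := by
      rw [EuclideanSpace.inner_eq_star_dotProduct]
      simp only [dotProduct, map_sum, Finset.sum_mul_sum, map_mul]
      rw [Fintype.sum_prod_type]
      refine Finset.sum_congr rfl fun a _ => Finset.sum_congr rfl fun b _ => ?_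
      simp only [hφ, Pi.star_apply, WithLp.ofLp_toLp, RCLike.star_def, map_mul,
        RingHomCompTriple.comp_apply, RingHom.id_apply, starRingEnd_self_apply]
      ring
    rcases eq_or_ne j k with h | h
    · subst h
      have hB : (starRingEnd ℂ) (∑ b, (starRingEnd ℂ) (β j b) * β j b)
          = ∑ b, (starRingEnd ℂ) (β j b) * β j b := by
        simp only [map_sum, map_mul, starRingEnd_self_apply]
        exact Finset.sum_congr rfl fun b _ => mul_comm _ _
      rw [hφinner, hB]
      simpa using hfact j j
    · have h0 := hfact j k
      rw [if_neg h] at h0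
      rcases mul_eq_zero.mp h0 with hA | hB
      · rw [hφinner, hA, zero_mul, if_neg h]
      · rw [hφinner, hB, map_zero, mul_zero, if_neg h]
  -- rewrite ρPT in terms of φ
  have hform : ρPT = c • ((1 : Matrix (Fin dA × Fin dB) (Fin dA × Fin dB) ℂ)
      - ∑ j, Matrix.vecMulVec (φ j) (star (φ j))) := by
    ext p q
    rw [hPT, hρ]
    simp only [Matrix.smul_apply, Matrix.sub_apply, Matrix.sum_apply, Matrix.one_apply,
      Matrix.vecMulVec_apply, Pi.star_apply, hψ, hφ, RCLike.star_def, map_mul,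
      starRingEnd_self_apply, smul_eq_mul]
    congr 1
    congr 1
    · congr 1
      simp [Prod.ext_iff, and_comm, eq_comm]
    · exact Finset.sum_congr rfl fun j _ => by ring
  have hcconj : (starRingEnd ℂ) c = c := by
    rw [hc]; simp [map_inv₀, Complex.conj_natCast]
  refine Matrix.PosSemidef.of_dotProduct_mulVec_nonneg ?_ ?_
  · -- Hermitian
    rw [hform]
    ext p q
    simp only [Matrix.conjTranspose_apply, Matrix.smul_apply, Matrix.sub_apply,
      Matrix.sum_apply, Matrix.one_apply, Matrix.vecMulVec_apply, Pi.star_apply,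
      smul_eq_mul, map_mul, map_sub, map_sum, RCLike.star_def]
    rw [hcconj]
    congr 1
    congr 1
    · simp [eq_comm]
    · exact Finset.sum_congr rfl fun j _ => by
        simp only [map_mul, starRingEnd_self_apply]; ring
  · intro x
    rw [hform]
    set g : Fin n → ℂ := fun j => ∑ p, (starRingEnd ℂ) (φ j p) * x p with hg
    -- compute the quadratic form
    have key : dotProduct (star x)
        (Matrix.mulVec (c • ((1 : Matrix (Fin dA × Fin dB) (Fin dA × Fin dB) ℂ)
          - ∑ j, Matrix.vecMulVec (φ j) (star (φ j)))) x)
        = c * ((∑ p, (starRingEnd ℂ) (x p) * x p)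
          - ∑ j, (starRingEnd ℂ) (g j) * g j) := by
      rw [Matrix.smul_mulVec, dotProduct_smul, smul_eq_mul]
      congr 1
      rw [Matrix.sub_mulVec, dotProduct_sub, Matrix.one_mulVec]
      congr 1
      have hmv : Matrix.mulVec (∑ j, Matrix.vecMulVec (φ j) (star (φ j))) x
          = ∑ j, Matrix.mulVec (Matrix.vecMulVec (φ j) (star (φ j))) x := by
        ext p
        simp only [Matrix.mulVec, dotProduct, Matrix.sum_apply, Finset.sum_mul,
          Finset.sum_apply]
        rw [Finset.sum_comm]
      rw [hmv]
      have hdp : dotProduct (star x)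
            (∑ j, Matrix.mulVec (Matrix.vecMulVec (φ j) (star (φ j))) x)
          = ∑ j, dotProduct (star x)
              (Matrix.mulVec (Matrix.vecMulVec (φ j) (star (φ j))) x) := by
        simp only [dotProduct, Finset.sum_apply, Finset.mul_sum]
        rw [Finset.sum_comm]
      rw [hdp]
      refine Finset.sum_congr rfl fun j _ => ?_
      simp only [dotProduct, Matrix.mulVec, Matrix.vecMulVec_apply, Pi.star_apply,
        hg, map_sum, dotProduct, map_mul, Finset.sum_mul, Finset.mul_sum,
        RCLike.star_def, starRingEnd_self_apply]
      rw [Finset.sum_comm]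
      refine Finset.sum_congr rfl fun p _ => Finset.sum_congr rfl fun q _ => ?_
      ring
    rw [key]
    set y : EuclideanSpace ℂ (Fin dA × Fin dB) := WithLp.toLp 2 x with hy
    have h1 : (∑ p, (starRingEnd ℂ) (x p) * x p) = ((‖y‖ : ℂ)) ^ 2 := by
      rw [show (∑ p, (starRingEnd ℂ) (x p) * x p) = (inner ℂ y y : ℂ) from by
          rw [EuclideanSpace.inner_eq_star_dotProduct]; simp [hy, dotProduct, mul_comm],
        inner_self_eq_norm_sq_to_K]
      norm_cast
    have h2 : ∀ j, (starRingEnd ℂ) (g j) * g j = ((‖(inner ℂ (φ j) y : ℂ)‖ ^ 2 : ℝ) : ℂ) := by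
      intro j
      rw [show g j = (inner ℂ (φ j) y : ℂ) from by
        rw [EuclideanSpace.inner_eq_star_dotProduct]; simp [hg, hy, dotProduct, mul_comm], RCLike.conj_mul]
      norm_cast
    have h3 : (∑ j, (starRingEnd ℂ) (g j) * g j)
        = ((∑ j, ‖(inner ℂ (φ j) y : ℂ)‖ ^ 2 : ℝ) : ℂ) := by
      simp only [h2]
      norm_cast
    rw [h1, h3]
    have hcast : c * (((‖y‖ : ℂ)) ^ 2 - ((∑ j, ‖(inner ℂ (φ j) y : ℂ)‖ ^ 2 : ℝ) : ℂ))
        = (((((dA * dB - n : ℕ) : ℝ))⁻¹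
            * (‖y‖ ^ 2 - ∑ j, ‖(inner ℂ (φ j) y : ℂ)‖ ^ 2) : ℝ) : ℂ) := by
      rw [hc]; push_cast; ring
    rw [hcast, Complex.zero_le_real]
    have hbessel := hortho.sum_inner_products_le (s := Finset.univ) y
    refine mul_nonneg (inv_nonneg.mpr (Nat.cast_nonneg _)) ?_
    linarith [hbessel]
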